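/- Let 0 < γ ≤ 1/10, let η = γ²/10³ + 3·γ²/10⁴, let p ∈ (0,1], and let C ≥ 10¹⁰·(γ²/10⁴)⁻². Let H be a graph on n vertices with minimum degree δ(H) ≥ (2/5 + γ)·p·n, and suppose that e_H(A) ≤ max(|A|²·p, 9n) for every vertex set A ⊆ V(H). Let X ⊆ V(H) satisfy e_H(X) ≤ η·p·n², and define X̃ = {x ∈ X : deg_H(x, X) ≥ γ·deg_H(x)}. Then |X̃| ≤ γ·n/100; moreover, if e_H(X) > (1/2)·C·p⁻¹·n, then e_H(X̃) ≤ (1/2)·e_H(X). -/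

import Mathlib

open MeasureTheory Filter

/-- Number of ordered pairs `(a,b) ∈ A × B` with `a` adjacent to `b`; for
disjoint `A`, `B` this is the number of edges between `A` and `B`. -/
noncomputable def edgeCount {V : Type*} (G : SimpleGraph V) (A B : Set V) : ℕ :=
  Set.ncard {q : V × V | q.1 ∈ A ∧ q.2 ∈ B ∧ G.Adj q.1 q.2}

/-- Number of edges with both ends in `A`. -/
noncomputable def edgesIn {V : Type*} (G : SimpleGraph V) (A : Set V) : ℕ :=
  Set.ncard {e ∈ G.edgeSet | ∀ v ∈ e, v ∈ A}

/-- Number of neighbours of `v` in `A`. -/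
noncomputable def degIn {V : Type*} (G : SimpleGraph V) (v : V) (A : Set V) : ℕ :=
  (G.neighborSet v ∩ A).ncard


lemma key_sum {n : ℕ} (H : SimpleGraph (Fin n)) (X : Set (Fin n)) (T : Finset (Fin n)) (hT : ∀ x ∈ T, x ∈ X) :
    ∑ x ∈ T, ((H.neighborSet x ∩ X).ncard) ≤ 2 * edgesIn H X := by
  classical
  set P : Finset (Fin n × Fin n) :=
    Finset.univ.filter (fun q => q.1 ∈ T ∧ q.2 ∈ X ∧ H.Adj q.1 q.2) with hP
  have h1 : P.card = ∑ x ∈ T, ((H.neighborSet x ∩ X).ncard) := by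
    rw [Finset.card_eq_sum_card_fiberwise (f := Prod.fst) (t := T)
      (by intro q hq; simp only [hP, Finset.mem_coe, Finset.mem_filter] at hq; exact hq.2.1)]
    refine Finset.sum_congr rfl fun x hx => ?_
    rw [Set.ncard_eq_toFinset_card _ (Set.toFinite _)]
    refine Finset.card_nbij' Prod.snd (fun y => (x, y)) ?_ ?_ ?_ ?_
    · intro q hq
      simp only [hP, Finset.mem_coe, Finset.mem_filter, Finset.mem_univ, true_and] at hq
      obtain ⟨⟨h1, h2, h3⟩, h4⟩ := hq
      rw [Finset.mem_coe, Set.Finite.mem_toFinset]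
      exact ⟨h4 ▸ h3, h2⟩
    · intro y hy
      simp only [Finset.mem_coe, Set.Finite.mem_toFinset, Set.mem_inter_iff, SimpleGraph.mem_neighborSet] at hy
      simp [hP, hx, hy.1, hy.2]
    · intro q hq
      simp only [hP, Finset.mem_coe, Finset.mem_filter] at hq
      exact Prod.ext hq.2.symm rfl
    · intro y _; rfl
  have h2 : P.card ≤ 2 * edgesIn H X := by
    have hmap : ∀ q ∈ P, (s(q.1, q.2), decide (q.1 ≤ q.2)) ∈
        (Set.toFinite {e ∈ H.edgeSet | ∀ v ∈ e, v ∈ X}).toFinset ×ˢ (Finset.univ : Finset Bool) := by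
      intro q hq
      simp only [hP, Finset.mem_filter, Finset.mem_univ, true_and] at hq
      obtain ⟨h1, h2, h3⟩ := hq
      simp only [Finset.mem_product, Set.Finite.mem_toFinset, Set.mem_setOf_eq,
        Finset.mem_univ, and_true]
      refine ⟨h3, ?_⟩
      intro v hv
      rw [Sym2.mem_iff] at hv
      rcases hv with rfl | rfl
      · exact hT _ h1
      · exact h2
    have hinj : Set.InjOn (fun q : Fin n × Fin n => (s(q.1, q.2), decide (q.1 ≤ q.2))) P := by
      intro q hq r hr heq
      simp only [hP, Finset.coe_filter, Set.mem_setOf_eq] at hq hr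
      simp only [Prod.mk.injEq, Sym2.eq_iff, decide_eq_decide] at heq
      obtain ⟨hcase, hdec⟩ := heq
      rcases hcase with ⟨h1, h2⟩ | ⟨h1, h2⟩
      · exact Prod.ext h1 h2
      · exfalso
        apply hq.2.2.2.ne
        rw [h1, h2] at hdec ⊢
        rcases le_total r.2 r.1 with hle | hle
        · exact le_antisymm hle (hdec.mp hle)
        · exact le_antisymm (hdec.mpr hle) hle
    calc P.card ≤ ((Set.toFinite {e ∈ H.edgeSet | ∀ v ∈ e, v ∈ X}).toFinset ×ˢ
          (Finset.univ : Finset Bool)).card := Finset.card_le_card_of_injOn _ hmap hinj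
      _ = 2 * edgesIn H X := by
          rw [Finset.card_product, edgesIn, Set.ncard_eq_toFinset_card _ (Set.toFinite _)]
          simp [Nat.mul_comm]
  omega

set_option maxHeartbeats 1000000 in
/-- **Claim 5.3** (deterministic form). The set `X̃` of vertices of `X` with
many neighbours in `X` is small, and if `X` spans many edges then `X̃` spans at
most half of them. -/
theorem high_internal_degree_set (γ : ℝ) (hγ0 : 0 < γ) (hγ1 : γ ≤ 1 / 10)
    (p : ℝ) (hp0 : 0 < p) (hp1 : p ≤ 1)
    (C : ℝ) (hC : 10 ^ 10 * ((γ ^ 2 / 10 ^ 4)⁻¹) ^ 2 ≤ C)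
    (n : ℕ) (H : SimpleGraph (Fin n))
    (hdeg : ∀ v : Fin n, (2 / 5 + γ) * p * n ≤ ((H.neighborSet v).ncard : ℝ))
    (hsets : ∀ A : Set (Fin n), (edgesIn H A : ℝ) ≤ max ((A.ncard : ℝ) ^ 2 * p) (9 * n))
    (X : Set (Fin n))
    (hX : (edgesIn H X : ℝ) ≤ (γ ^ 2 / 10 ^ 3 + 3 * (γ ^ 2 / 10 ^ 4)) * p * n ^ 2) :
    ((Set.ncard {x ∈ X | γ * ((H.neighborSet x).ncard : ℝ)
        ≤ ((H.neighborSet x ∩ X).ncard : ℝ)} : ℝ) ≤ γ * n / 100) ∧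
    (1 / 2 * C * p⁻¹ * n < (edgesIn H X : ℝ) →
      (edgesIn H {x ∈ X | γ * ((H.neighborSet x).ncard : ℝ)
          ≤ ((H.neighborSet x ∩ X).ncard : ℝ)} : ℝ)
        ≤ 1 / 2 * (edgesIn H X : ℝ)) := by
  classical
  set S : Set (Fin n) := {x ∈ X | γ * ((H.neighborSet x).ncard : ℝ)
      ≤ ((H.neighborSet x ∩ X).ncard : ℝ)} with hS
  set T : Finset (Fin n) := (Set.toFinite S).toFinset with hTdef
  have hST : (S.ncard : ℝ) = (T.card : ℝ) := by
    rw [Set.ncard_eq_toFinset_card _ (Set.toFinite S)]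
  have hTX : ∀ x ∈ T, x ∈ X := by
    intro x hx
    exact (((Set.Finite.mem_toFinset _).mp hx).1)
  have hm0 : (0:ℝ) ≤ (S.ncard : ℝ) := Nat.cast_nonneg _
  have hchain : (S.ncard : ℝ) * (γ * ((2/5 + γ) * p * n)) ≤ 2 * (edgesIn H X : ℝ) := by
    have hlow : ∀ x ∈ T, γ * ((2/5 + γ) * p * n) ≤ ((H.neighborSet x ∩ X).ncard : ℝ) := by
      intro x hx
      have hx' := (Set.Finite.mem_toFinset _).mp hx
      calc γ * ((2/5 + γ) * p * n) ≤ γ * ((H.neighborSet x).ncard : ℝ) := by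
            have := hdeg x
            have h25 : (2/5 + γ) * p * (n:ℝ) = 2 / 5 * p * n + γ * p * n := by ring
            exact mul_le_mul_of_nonneg_left (by linarith [hdeg x]) hγ0.le
        _ ≤ _ := hx'.2
    have hsum := Finset.card_nsmul_le_sum T
      (fun x => ((H.neighborSet x ∩ X).ncard : ℝ)) _ hlow
    rw [nsmul_eq_mul] at hsum
    have hkey := key_sum H X T hTX
    have hcast : (∑ x ∈ T, ((H.neighborSet x ∩ X).ncard : ℝ)) ≤ 2 * (edgesIn H X : ℝ) := by
      have : ((∑ x ∈ T, (H.neighborSet x ∩ X).ncard : ℕ) : ℝ)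
          ≤ ((2 * edgesIn H X : ℕ) : ℝ) := Nat.cast_le.mpr hkey
      push_cast at this
      exact this
    rw [hST]
    linarith
  constructor
  · rcases Nat.eq_zero_or_pos n with hn | hn
    · subst hn
      have : S = ∅ := Set.eq_empty_of_isEmpty S
      rw [this]
      simp
    · have hn' : (0:ℝ) < n := by exact_mod_cast hn
      have hX' : (edgesIn H X : ℝ) ≤ (13 * γ ^ 2 / 10 ^ 4) * p * n ^ 2 := by
        calc (edgesIn H X : ℝ) ≤ (γ ^ 2 / 10 ^ 3 + 3 * (γ ^ 2 / 10 ^ 4)) * p * n ^ 2 := hX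
          _ = (13 * γ ^ 2 / 10 ^ 4) * p * n ^ 2 := by ring
      nlinarith [hchain, hX', mul_pos (mul_pos hγ0 hp0) hn',
        mul_nonneg (mul_nonneg (mul_nonneg hm0 (sq_nonneg γ)) hp0.le) hn'.le]
  · intro h
    have hCpos : (0:ℝ) < C := by
      have : (0:ℝ) < 10 ^ 10 * ((γ ^ 2 / 10 ^ 4)⁻¹) ^ 2 := by positivity
      linarith
    have he : (0:ℝ) < (edgesIn H X : ℝ) := by
      have : (0:ℝ) ≤ 1 / 2 * C * p⁻¹ * n := by positivity
      linarith
    have hn' : (0:ℝ) < n := by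
      rcases Nat.eq_zero_or_pos n with hn | hn
      · exfalso
        subst hn
        push_cast at hX
        nlinarith [hX, he]
      · exact_mod_cast hn
    have h1p : (1:ℝ) ≤ p⁻¹ := (one_le_inv₀ hp0).mpr hp1
    have hC' : (10:ℝ) ^ 10 ≤ C := by
      have hg : γ ^ 2 / 10 ^ 4 ≤ 1 := by nlinarith
      have h1 : (1:ℝ) ≤ (γ ^ 2 / 10 ^ 4)⁻¹ := (one_le_inv₀ (by positivity)).mpr hg
      nlinarith [hC, h1]
    set e : ℝ := (edgesIn H X : ℝ) with hedef
    have h9 : 9 * (n:ℝ) ≤ 1 / 2 * e := by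
      have h2 : 1 / 2 * 10 ^ 10 * 1 * (n:ℝ) ≤ 1 / 2 * C * p⁻¹ * n := by
        have hCp : 1 / 2 * 10 ^ 10 * 1 ≤ 1 / 2 * C * p⁻¹ := by nlinarith [hC', h1p]
        exact mul_le_mul_of_nonneg_right hCp hn'.le
      linarith [h, h2]
    have hX' : e ≤ (13 * γ ^ 2 / 10 ^ 4) * p * n ^ 2 := by
      calc e ≤ (γ ^ 2 / 10 ^ 3 + 3 * (γ ^ 2 / 10 ^ 4)) * p * n ^ 2 := hX
        _ = (13 * γ ^ 2 / 10 ^ 4) * p * n ^ 2 := by ring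
    have hd : (0:ℝ) < γ ^ 2 * p * (n:ℝ) ^ 2 := by positivity
    have hmb : (S.ncard : ℝ) * (2 * γ / 5 * p * n) ≤ 2 * e := by
      have hterm := mul_nonneg (mul_nonneg (mul_nonneg hm0 (sq_nonneg γ)) hp0.le) hn'.le
      nlinarith [hchain, hterm]
    have hsq2 : ((S.ncard : ℝ) * (2 * γ / 5 * p * n)) ^ 2 ≤ (2 * e) ^ 2 :=
      pow_le_pow_left₀ (by positivity) hmb 2
    have hstep : ((S.ncard : ℝ) ^ 2 * p * (4 / 25)) * (γ ^ 2 * p * (n:ℝ) ^ 2)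
        ≤ ((52 / 10 ^ 4) * e) * (γ ^ 2 * p * (n:ℝ) ^ 2) := by
      nlinarith [hsq2, mul_le_mul_of_nonneg_left hX' (by positivity : (0:ℝ) ≤ 4 * e)]
    have hfin : (S.ncard : ℝ) ^ 2 * p * (4 / 25) ≤ (52 / 10 ^ 4) * e :=
      le_of_mul_le_mul_right hstep hd
    have hsqle : (S.ncard : ℝ) ^ 2 * p ≤ 1 / 2 * e := by linarith
    exact (hsets S).trans (max_le hsqle h9)
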